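/- Let H : ℝ → ℝ be twice continuously differentiable on [0,R] satisfying 2H'' + H^3 + α·H = 0 with H'(0) = H'(R) = 0. Setting A = H(0) and B = H(R), then 4·H'(t)^2 = −(H(t) − A)·(H(t) + A)·(H(t)^2 + 2α + A^2) for all t ∈ [0,R], and consequently 0 = (B − A)(B + A)(B^2 + 2α + A^2). -/

import Mathlib

/-- For a solution of `2H'' + H^3 + αH = 0` on `[0,R]` with `H'(0) = H'(R) = 0`,
setting `A = H(0)` and `B = H(R)`, the conservation law gives
`4 H'^2 = -(H-A)(H+A)(H^2 + 2α + A^2)`, and evaluating at `R` yields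
`0 = (B-A)(B+A)(B^2 + 2α + A^2)`. -/
theorem conservation_factored (α R : ℝ) (hR : 0 ≤ R) (H : ℝ → ℝ)
    (hH : ContDiff ℝ 2 H)
    (hode : ∀ t ∈ Set.Icc (0:ℝ) R, 2 * deriv (deriv H) t + (H t) ^ 3 + α * H t = 0)
    (h0 : deriv H 0 = 0) (hR' : deriv H R = 0)
    (A B : ℝ) (hA : A = H 0) (hB : B = H R) :
    (∀ t ∈ Set.Icc (0:ℝ) R,
      4 * (deriv H t) ^ 2 =
        -((H t - A) * (H t + A) * ((H t) ^ 2 + 2 * α + A ^ 2))) ∧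
    0 = (B - A) * (B + A) * (B ^ 2 + 2 * α + A ^ 2) := by
  have hH1 : Differentiable ℝ H := hH.differentiable (by norm_num)
  have hd : Differentiable ℝ (deriv H) := by
    have := (contDiff_succ_iff_deriv.mp (show ContDiff ℝ (1+1) H by exact_mod_cast hH)).2.2
    exact this.differentiable (by norm_num)
  set E : ℝ → ℝ := fun t => 4 * (deriv H t) ^ 2 + ((H t) ^ 4 + 2 * α * (H t) ^ 2) with hE
  have hEderiv : ∀ x ∈ Set.Ico (0:ℝ) R, HasDerivWithinAt E 0 (Set.Ici x) x := by
    intro x hx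
    have h1 : HasDerivAt H (deriv H x) x := (hH1 x).hasDerivAt
    have h2 : HasDerivAt (deriv H) (deriv (deriv H) x) x := (hd x).hasDerivAt
    have : HasDerivAt E (4 * (2 * deriv H x * deriv (deriv H) x)
        + 4 * (H x) ^ 3 * deriv H x + 2 * α * (2 * H x * deriv H x)) x := by
      have := ((h2.pow 2).const_mul 4).add
        ((h1.pow 4).add ((h1.pow 2).const_mul (2 * α)))
      convert this using 1
      · rfl
      · rfl
      · rfl
      push_cast
      ring
    have hz : 4 * (2 * deriv H x * deriv (deriv H) x)
        + 4 * (H x) ^ 3 * deriv H x + 2 * α * (2 * H x * deriv H x)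
        = 4 * deriv H x * (2 * deriv (deriv H) x + (H x) ^ 3 + α * H x) := by ring
    rw [hz, hode x ⟨hx.1, hx.2.le⟩, mul_zero] at this
    exact this.hasDerivWithinAt
  have hEdiff : Differentiable ℝ E :=
    (((hd.pow 2).const_mul 4).add ((hH1.pow 4).add ((hH1.pow 2).const_mul (2*α))))
  have hEcont : ContinuousOn E (Set.Icc 0 R) := hEdiff.continuous.continuousOn
  have hconst : ∀ t ∈ Set.Icc (0:ℝ) R, E t = E 0 :=
    fun t ht => constant_of_has_deriv_right_zero hEcont hEderiv t ht
  have hE0 : E 0 = A ^ 4 + 2 * α * A ^ 2 := by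
    simp only [hE, h0, hA]; ring
  have main : ∀ t ∈ Set.Icc (0:ℝ) R,
      4 * (deriv H t) ^ 2 =
        -((H t - A) * (H t + A) * ((H t) ^ 2 + 2 * α + A ^ 2)) := by
    intro t ht
    have := hconst t ht
    rw [hE0] at this
    simp only [hE] at this
    nlinarith [this]
  refine ⟨main, ?_⟩
  have := main R ⟨hR, le_rfl⟩
  rw [hR', ← hB] at this
  nlinarith [this]
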